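/- For all 0 ≤ θ₁ ≤ θ₂, m > 0 and a > 0, ∫_{θ₁}^{θ₂} e^{−mx} log(1 + ax) dx = F₁(θ₂) − F₁(θ₁), where F₁(y) = (1/m) · ( −e^{m/a} · E₁(my + m/a) − e^{−my} · log(ay + 1) ). -/

import Mathlib

open MeasureTheory Real

/-- The exponential integral function `E₁(x) = ∫_x^∞ e^{−t}/t dt`. -/
noncomputable def expE1 (x : ℝ) : ℝ := ∫ t in Set.Ioi x, Real.exp (-t) / t

lemma integrableOn_expE1 {x : ℝ} (hx : 0 < x) :
    IntegrableOn (fun t => Real.exp (-t) / t) (Set.Ioi x) := by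
  have hbase : IntegrableOn (fun t : ℝ => Real.exp (-1 * t) / x) (Set.Ioi x) :=
    MeasureTheory.Integrable.div_const (exp_neg_integrableOn_Ioi x (by norm_num)) x
  refine MeasureTheory.Integrable.mono' hbase ?_ ?_
  · exact (((Real.measurable_exp.comp measurable_neg).div
      measurable_id).aestronglyMeasurable).restrict
  · filter_upwards [ae_restrict_mem measurableSet_Ioi] with t ht
    have ht' : x < t := ht
    rw [Real.norm_eq_abs, abs_div, abs_of_pos (Real.exp_pos _),
      abs_of_pos (hx.trans ht'), neg_one_mul]
    exact div_le_div_of_nonneg_left (Real.exp_pos _).le hx ht'.le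

lemma expE1_eq {c x : ℝ} (hc : 0 < c) (hcx : c ≤ x) :
    expE1 x = expE1 c - ∫ t in c..x, Real.exp (-t) / t := by
  have hx : 0 < x := hc.trans_le hcx
  have h1 : IntegrableOn (fun t => Real.exp (-t) / t) (Set.Ioc c x) :=
    (integrableOn_expE1 hc).mono_set Set.Ioc_subset_Ioi_self
  have h2 := integrableOn_expE1 hx
  simp only [expE1]
  rw [intervalIntegral.integral_of_le hcx, eq_sub_iff_add_eq, add_comm,
    ← setIntegral_union (Set.Ioc_disjoint_Ioi le_rfl) measurableSet_Ioi h1 h2,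
    Set.Ioc_union_Ioi_eq_Ioi hcx]

lemma hasDerivAt_expE1 {x : ℝ} (hx : 0 < x) :
    HasDerivAt expE1 (-(Real.exp (-x) / x)) x := by
  set c := x / 2 with hcdef
  have hc0 : 0 < c := by positivity
  have hcx : c < x := by linarith
  have hint : IntervalIntegrable (fun t => Real.exp (-t) / t) volume c x := by
    apply ContinuousOn.intervalIntegrable
    apply ((Real.continuous_exp.comp continuous_neg).continuousOn).div continuousOn_id
    intro t ht
    rw [Set.uIcc_of_le hcx.le] at ht
    exact (hc0.trans_le ht.1).ne'
  have hmeas : StronglyMeasurableAtFilter (fun t => Real.exp (-t) / t) (nhds x) volume :=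
    (((Real.continuous_exp.comp continuous_neg).measurable.div
      measurable_id).aestronglyMeasurable).stronglyMeasurableAtFilter
  have hcont : ContinuousAt (fun t => Real.exp (-t) / t) x :=
    (((Real.continuous_exp.comp continuous_neg).continuousAt).div continuousAt_id hx.ne')
  have hD : HasDerivAt (fun u => expE1 c - ∫ t in c..u, Real.exp (-t) / t)
      (-(Real.exp (-x) / x)) x := by
    have := (intervalIntegral.integral_hasDerivAt_right hint hmeas hcont).const_sub (expE1 c)
    simpa using this
  apply hD.congr_of_eventuallyEq
  filter_upwards [eventually_gt_nhds hcx] with y hy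
  exact expE1_eq hc0 hy.le

/-- For all `0 ≤ θ₁ ≤ θ₂`, `m > 0` and `a > 0`,
`∫_{θ₁}^{θ₂} e^{−mx} log(1 + ax) dx = F₁(θ₂) − F₁(θ₁)`, where
`F₁(y) = (1/m)(−e^{m/a} E₁(my + m/a) − e^{−my} log(ay + 1))`. -/
theorem integral_exp_neg_mul_log (θ₁ θ₂ m a : ℝ) (hθ₁ : 0 ≤ θ₁) (hθ : θ₁ ≤ θ₂)
    (hm : 0 < m) (ha : 0 < a) :
    let F₁ : ℝ → ℝ := fun y => (1 / m) *
      (-(Real.exp (m / a)) * expE1 (m * y + m / a) -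
        Real.exp (-(m * y)) * Real.log (a * y + 1))
    (∫ x in θ₁..θ₂, Real.exp (-(m * x)) * Real.log (1 + a * x)) =
      F₁ θ₂ - F₁ θ₁ := by
  intro F₁
  have key : ∀ y ∈ Set.Icc θ₁ θ₂,
      HasDerivAt F₁ (Real.exp (-(m * y)) * Real.log (1 + a * y)) y := by
    intro y hy
    have hy0 : 0 ≤ y := hθ₁.trans hy.1
    have hay : 0 < a * y + 1 := by positivity
    have harg : 0 < m * y + m / a := by positivity
    have h1 : HasDerivAt (fun y : ℝ => m * y + m / a) m y := by
      simpa using ((hasDerivAt_id y).const_mul m).add_const (m / a)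
    have hE : HasDerivAt (fun y => expE1 (m * y + m / a))
        (-(Real.exp (-(m * y + m / a)) / (m * y + m / a)) * m) y := by
      have := (hasDerivAt_expE1 harg).comp y h1; exact this
    have hexp : HasDerivAt (fun y : ℝ => Real.exp (-(m * y)))
        (Real.exp (-(m * y)) * (-m)) y := by
      have : HasDerivAt (fun y : ℝ => -(m * y)) (-m) y := by
        exact (((hasDerivAt_id y).const_mul m).neg).congr_deriv (by ring)
      exact (Real.hasDerivAt_exp _).comp y this
    have hlog : HasDerivAt (fun y : ℝ => Real.log (a * y + 1)) (a / (a * y + 1)) y := by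
      have hlin : HasDerivAt (fun y : ℝ => a * y + 1) a y := by
        simpa using ((hasDerivAt_id y).const_mul a).add_const 1
      have := (Real.hasDerivAt_log hay.ne').comp y hlin
      exact this.congr_deriv (by ring)
    have hF : HasDerivAt F₁ ((1 / m) *
        (-(Real.exp (m / a)) * (-(Real.exp (-(m * y + m / a)) / (m * y + m / a)) * m) -
          (Real.exp (-(m * y)) * (-m) * Real.log (a * y + 1) +
            Real.exp (-(m * y)) * (a / (a * y + 1))))) y :=
      ((hE.const_mul (-(Real.exp (m / a)))).sub (hexp.mul hlog)).const_mul (1 / m)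
    have h2 : -(Real.exp (m / a)) * (-(Real.exp (-(m * y + m / a)) / (m * y + m / a)) * m) =
        Real.exp (-(m * y)) * (a / (a * y + 1)) := by
      have hc : Real.exp (m / a) * Real.exp (-(m * y + m / a)) = Real.exp (-(m * y)) := by
        rw [← Real.exp_add]; ring_nf
      have hma : m * y + m / a = m * (a * y + 1) / a := by field_simp
      rw [show -(Real.exp (m / a)) * (-(Real.exp (-(m * y + m / a)) / (m * y + m / a)) * m) =
          (Real.exp (m / a) * Real.exp (-(m * y + m / a))) * (m / (m * y + m / a)) by ring, hc, hma,
        div_div_eq_mul_div, mul_div_mul_left _ _ hm.ne']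
    rw [h2] at hF
    have hlog1 : Real.log (1 + a * y) = Real.log (a * y + 1) := by ring_nf
    convert hF using 1
    rw [hlog1]
    field_simp
    ring
  have hcont : IntervalIntegrable (fun x => Real.exp (-(m * x)) * Real.log (1 + a * x))
      volume θ₁ θ₂ := by
    apply ContinuousOn.intervalIntegrable
    apply ContinuousOn.mul
    · exact (Real.continuous_exp.comp (continuous_const.mul continuous_id).neg).continuousOn
    · apply Real.continuousOn_log.comp (continuous_const.add
        (continuous_const.mul continuous_id)).continuousOn
      intro x hx
      rw [Set.uIcc_of_le hθ] at hx
      have : 0 ≤ x := hθ₁.trans hx.1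
      simp only [Set.mem_compl_iff, Set.mem_singleton_iff]
      exact (by positivity : (0:ℝ) < 1 + a * x).ne'
  rw [intervalIntegral.integral_eq_sub_of_hasDerivAt (fun y hy => key y
    (by rwa [Set.uIcc_of_le hθ] at hy)) hcont]
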